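/- If b is a multiplicative sequence of positive integers (b_n divides b_{n+1} for all n, with b_{n+1}/b_n ≥ 2) and sup_n b_{n+1}/b_n = ∞, then the group G₁(b) = {t ∈ ℝ/ℤ : ∑_n ‖b_n t‖ < ∞} is uncountable. -/

import Mathlib

/-- `G₁(b)` inside the circle `ℝ/ℤ`; the norm on `AddCircle (1:ℝ)` is the
distance to the nearest integer. -/
noncomputable def G1 (b : ℕ → ℕ) : Set (AddCircle (1:ℝ)) :=
  {t | Summable (fun n => ‖b n • t‖)}

section Stmt4Aux

variable {b : ℕ → ℕ}

lemma stmt4_geo (hratio : ∀ n, 2 * b n ≤ b (n + 1)) : ∀ k n, 2 ^ k * b n ≤ b (n + k) := by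
  intro k
  induction k with
  | zero => intro n; simpa using le_refl (b n)
  | succ k ih =>
    intro n
    have h1 := ih n
    have h2 := hratio (n + k)
    have h3 : 2 ^ (k + 1) * b n = 2 * (2 ^ k * b n) := by ring
    have h4 : n + (k + 1) = n + k + 1 := rfl
    rw [h4, h3]
    omega

lemma stmt4_mono (hbpos : ∀ n, 0 < b n) (hratio : ∀ n, 2 * b n ≤ b (n + 1)) :
    ∀ {n m : ℕ}, n ≤ m → b n ≤ b m := by
  intro n m h
  obtain ⟨k, rfl⟩ := Nat.exists_eq_add_of_le h
  have := stmt4_geo hratio k n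
  have : 1 * b n ≤ 2 ^ k * b n := Nat.mul_le_mul_right _ (Nat.one_le_two_pow)
  omega

lemma stmt4_dvd (hdvd : ∀ n, b n ∣ b (n + 1)) : ∀ {n m : ℕ}, n ≤ m → b n ∣ b m := by
  intro n m h
  induction m with
  | zero => simpa [Nat.le_zero.mp h] using dvd_refl (b 0)
  | succ m ih =>
    rcases Nat.lt_or_ge n (m + 1) with h' | h'
    · exact (ih (by omega)).trans (hdvd m)
    · have : n = m + 1 := by omega
      subst this; rfl

lemma stmt4_sum (hratio : ∀ n, 2 * b n ≤ b (n + 1)) :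
    ∀ N, ∑ i ∈ Finset.range (N + 1), b i ≤ 2 * b N := by
  intro N
  induction N with
  | zero => simp [two_mul]
  | succ N ih =>
    rw [Finset.sum_range_succ]
    have := hratio N
    omega

lemma stmt4_natcast_coe_zero (N : ℕ) : ((N : ℝ) : AddCircle (1 : ℝ)) = 0 := by
  rw [AddCircle.coe_eq_zero_iff]; exact ⟨N, by simp⟩

lemma stmt4_int_of_coe_eq {a c : ℝ} (h : (↑a : AddCircle (1 : ℝ)) = ↑c) :
    ∃ z : ℤ, a - c = z := by
  rw [QuotientAddGroup.eq] at h
  obtain ⟨z, hz⟩ := AddSubgroup.mem_zmultiples_iff.mp h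
  rw [zsmul_eq_mul, mul_one] at hz
  exact ⟨-z, by push_cast; linarith⟩

lemma stmt4_nsmul_coe (n : ℕ) (x : ℝ) :
    n • (↑x : AddCircle (1 : ℝ)) = (((n : ℝ) * x : ℝ) : AddCircle (1 : ℝ)) := by
  rw [← nsmul_eq_mul]
  exact (QuotientAddGroup.mk_nsmul _ x n).symm

lemma stmt4_uncountable_funs : ¬ Countable (ℕ → Bool) := by
  classical
  intro hcnt
  obtain ⟨g, hg⟩ := exists_injective_nat (ℕ → Bool)
  have hF : Function.Injective (fun s : Set ℕ => fun n => decide (n ∈ s)) := by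
    intro s s' h
    ext n
    have := congrFun h n
    simpa using this
  exact Function.cantor_injective (g ∘ fun s : Set ℕ => fun n => decide (n ∈ s)) (hg.comp hF)

end Stmt4Aux

/-- If `b` is multiplicative (`bₙ ∣ bₙ₊₁` with ratios `≥ 2`) with unbounded ratios,
then `G₁(b)` is uncountable. -/
theorem stmt4 (b : ℕ → ℕ) (hbpos : ∀ n, 0 < b n)
    (hdvd : ∀ n, b n ∣ b (n + 1)) (hratio : ∀ n, 2 * b n ≤ b (n + 1))
    (hsup : ∀ M : ℕ, ∃ n, M * b n ≤ b (n + 1)) :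
    ¬ (G1 b).Countable := by
  intro hc
  have hmono : ∀ {n m : ℕ}, n ≤ m → b n ≤ b m := fun h => stmt4_mono hbpos hratio h
  -- extract a strictly increasing sequence of indices with huge ratios
  have hexists : ∀ k : ℕ, ∃ᶠ n in Filter.atTop, 2 ^ (k + 2) * b n ≤ b (n + 1) := by
    intro k
    rw [Filter.frequently_atTop]
    intro N
    obtain ⟨n, hn⟩ := hsup (2 ^ (k + 2) + b (N + 1) + 1)
    refine ⟨n, ?_, ?_⟩
    · by_contra hlt
      push_neg at hlt
      have h1 : b (n + 1) ≤ b (N + 1) := hmono (by omega)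
      have h3 : 2 ^ (k + 2) + b (N + 1) + 1 ≤ (2 ^ (k + 2) + b (N + 1) + 1) * b n :=
        Nat.le_mul_of_pos_right _ (hbpos n)
      have h5 : 1 ≤ 2 ^ (k + 2) := Nat.one_le_two_pow
      omega
    · calc 2 ^ (k + 2) * b n ≤ (2 ^ (k + 2) + b (N + 1) + 1) * b n :=
            Nat.mul_le_mul_right _ (by omega)
        _ ≤ b (n + 1) := hn
  obtain ⟨m, hmsm, hm⟩ := Filter.extraction_forall_of_frequently hexists
  set β : ℕ → ℝ := fun k => ((b (m k + 1) : ℕ) : ℝ) with hβdef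
  have βpos : ∀ k, 0 < β k := fun k => by
    simpa [hβdef] using hbpos (m k + 1)
  have hβm : ∀ k, (2 : ℝ) ^ (k + 2) * (b (m k) : ℝ) ≤ β k := by
    intro k
    have := hm k
    simp only [hβdef]
    exact_mod_cast this
  have hβ4 : ∀ k, 4 ≤ β k := by
    intro k
    have h1 := hβm k
    have h2 : (1 : ℝ) ≤ (b (m k) : ℝ) := by exact_mod_cast hbpos (m k)
    have h3 : (4 : ℝ) ≤ (2 : ℝ) ^ (k + 2) := by
      calc (4 : ℝ) = 2 ^ 2 := by norm_num
        _ ≤ 2 ^ (k + 2) := by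
          apply pow_le_pow_right₀ (by norm_num) (by omega)
    nlinarith
  have hβ8 : ∀ k, 8 * β k ≤ β (k + 1) := by
    intro k
    have hnat : 8 * b (m k + 1) ≤ b (m (k + 1) + 1) := by
      have h1 : b (m k + 1) ≤ b (m (k + 1)) := hmono (hmsm (Nat.lt_succ_self k))
      have h2 := hm (k + 1)
      have h3 : (8 : ℕ) ≤ 2 ^ (k + 3) := by
        calc (8 : ℕ) = 2 ^ 3 := by norm_num
          _ ≤ 2 ^ (k + 3) := Nat.pow_le_pow_right (by norm_num) (by omega)
      calc 8 * b (m k + 1) ≤ 8 * b (m (k + 1)) := Nat.mul_le_mul_left _ h1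
        _ ≤ 2 ^ (k + 3) * b (m (k + 1)) := Nat.mul_le_mul_right _ h3
        _ ≤ b (m (k + 1) + 1) := h2
    simp only [hβdef]
    exact_mod_cast hnat
  have hβgeom : ∀ k i, (8 : ℝ) ^ i * β k ≤ β (k + i) := by
    intro k i
    induction i with
    | zero => simp
    | succ i ih =>
      have h1 := hβ8 (k + i)
      calc (8 : ℝ) ^ (i + 1) * β k = 8 * ((8 : ℝ) ^ i * β k) := by ring
        _ ≤ 8 * β (k + i) := by nlinarith [βpos (k + i)]
        _ ≤ β (k + i + 1) := h1
  have hβinv : ∀ k i, (β (k + i))⁻¹ ≤ (8 : ℝ)⁻¹ ^ i * (β k)⁻¹ := by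
    intro k i
    rw [inv_pow, ← mul_inv]
    exact inv_anti₀ (mul_pos (pow_pos (by norm_num) i) (βpos k)) (hβgeom k i)
  -- the digits function
  set f : (ℕ → Bool) → ℕ → ℝ := fun ε k => if ε k then (β k)⁻¹ else 0 with hfdef
  have hf0 : ∀ ε k, 0 ≤ f ε k := by
    intro ε k; simp only [hfdef]
    split <;> positivity
  have hfle : ∀ ε k, f ε k ≤ (β k)⁻¹ := by
    intro ε k; simp only [hfdef]
    split
    · exact le_refl _
    · positivity
  have hgeo8 : Summable (fun k : ℕ => (8 : ℝ)⁻¹ ^ k) :=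
    summable_geometric_of_lt_one (by norm_num) (by norm_num)
  have hβinv0 : ∀ k, (β k)⁻¹ ≤ (8 : ℝ)⁻¹ ^ k * (β 0)⁻¹ := by
    intro k
    simpa using hβinv 0 k
  have hsum_inv : Summable (fun k => (β k)⁻¹) := by
    refine Summable.of_nonneg_of_le (fun k => by positivity) hβinv0 ?_
    exact hgeo8.mul_right _
  have hfsummable : ∀ ε, Summable (f ε) := fun ε =>
    Summable.of_nonneg_of_le (hf0 ε) (hfle ε) hsum_inv
  set x : (ℕ → Bool) → ℝ := fun ε => ∑' k, f ε k with hxdef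
  have hx0 : ∀ ε, 0 ≤ x ε := fun ε => tsum_nonneg (hf0 ε)
  have hβ0inv : (β 0)⁻¹ ≤ 4⁻¹ := by
    have := hβ4 0
    exact inv_anti₀ (by norm_num) this
  have hSinv : ∑' k, (β k)⁻¹ ≤ 2 / 7 := by
    calc ∑' k, (β k)⁻¹ ≤ ∑' k, (8 : ℝ)⁻¹ ^ k * (β 0)⁻¹ :=
          Summable.tsum_le_tsum hβinv0 hsum_inv (hgeo8.mul_right _)
      _ = (1 - 8⁻¹)⁻¹ * (β 0)⁻¹ := by
          rw [tsum_mul_right, tsum_geometric_of_lt_one (by norm_num) (by norm_num)]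
      _ ≤ (1 - 8⁻¹)⁻¹ * 4⁻¹ := by
          have h : (0:ℝ) < (1 - 8⁻¹)⁻¹ := by norm_num
          nlinarith [hβ0inv]
      _ ≤ 2 / 7 := by norm_num
  have hxle : ∀ ε, x ε ≤ 2 / 7 := by
    intro ε
    calc x ε ≤ ∑' k, (β k)⁻¹ := Summable.tsum_le_tsum (hfle ε) (hfsummable ε) hsum_inv
      _ ≤ 2 / 7 := hSinv
  -- tail bounds
  have htail_ptw : ∀ k i, (β (i + (k + 1)))⁻¹ ≤ (8:ℝ)⁻¹ ^ (i + 1) * (β k)⁻¹ := by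
    intro k i
    have h1 : k + (i + 1) = i + (k + 1) := by omega
    have := hβinv k (i + 1)
    rwa [h1] at this
  have htail_sum : ∀ k, Summable (fun i => (β (i + (k + 1)))⁻¹) ∧
      ∑' i, (β (i + (k + 1)))⁻¹ ≤ (β k)⁻¹ / 7 := by
    intro k
    have hmaj : Summable (fun i : ℕ => (8:ℝ)⁻¹ ^ (i + 1) * (β k)⁻¹) := by
      have : (fun i : ℕ => (8:ℝ)⁻¹ ^ (i + 1) * (β k)⁻¹)
          = fun i : ℕ => (8:ℝ)⁻¹ ^ i * (8⁻¹ * (β k)⁻¹) := by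
        funext i; ring
      rw [this]
      exact hgeo8.mul_right _
    have hsummable : Summable (fun i => (β (i + (k + 1)))⁻¹) :=
      Summable.of_nonneg_of_le (fun i => by positivity) (htail_ptw k) hmaj
    refine ⟨hsummable, ?_⟩
    calc ∑' i, (β (i + (k + 1)))⁻¹ ≤ ∑' i : ℕ, (8:ℝ)⁻¹ ^ (i + 1) * (β k)⁻¹ :=
          Summable.tsum_le_tsum (htail_ptw k) hsummable hmaj
      _ = ∑' i : ℕ, (8:ℝ)⁻¹ ^ i * (8⁻¹ * (β k)⁻¹) := by
          apply tsum_congr; intro i; ring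
      _ = (1 - 8⁻¹)⁻¹ * (8⁻¹ * (β k)⁻¹) := by
          rw [tsum_mul_right, tsum_geometric_of_lt_one (by norm_num) (by norm_num)]
      _ = (β k)⁻¹ / 7 := by ring
  -- the comparison function for G1 membership
  classical
  set c : ℕ → ℕ → ℝ := fun n k => if m k < n then 0 else (b n : ℝ) * (β k)⁻¹ with hcdef
  have hc0 : ∀ n k, 0 ≤ c n k := by
    intro n k; simp only [hcdef]
    split
    · exact le_refl _
    · positivity
  have hcsummable : ∀ n, Summable (c n) := by
    intro n
    refine Summable.of_nonneg_of_le (hc0 n) (fun k => ?_) (hsum_inv.mul_left (b n : ℝ))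
    simp only [hcdef]
    split
    · positivity
    · exact le_refl _
  -- key pointwise bound
  have hkey : ∀ ε n, ‖(b n : ℕ) • ((x ε : ℝ) : AddCircle (1:ℝ))‖ ≤ ∑' k, c n k := by
    intro ε n
    rw [stmt4_nsmul_coe]
    set u : ℕ → ℝ := fun k => if m k < n then (b n : ℝ) * f ε k else 0 with hudef
    set v : ℕ → ℝ := fun k => if m k < n then 0 else (b n : ℝ) * f ε k with hvdef
    have huv : ∀ k, (b n : ℝ) * f ε k = u k + v k := by
      intro k
      by_cases h : m k < n <;> simp [hudef, hvdef, h]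
    have hv0 : ∀ k, 0 ≤ v k := by
      intro k; simp only [hvdef]
      split
      · exact le_refl _
      · exact mul_nonneg (by positivity) (hf0 ε k)
    have hvle : ∀ k, v k ≤ c n k := by
      intro k; simp only [hvdef, hcdef]
      split
      · exact le_refl _
      · exact mul_le_mul_of_nonneg_left (hfle ε k) (by positivity)
    have hvs : Summable v := Summable.of_nonneg_of_le hv0 hvle (hcsummable n)
    have husupp : ∀ k ∉ Finset.range n, u k = 0 := by
      intro k hk
      simp only [Finset.mem_range, not_lt] at hk
      have : ¬ (m k < n) := by
        have : k ≤ m k := hmsm.le_apply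
        omega
      simp [hudef, this]
    have hus : Summable u := summable_of_ne_finset_zero husupp
    have hxsplit : (b n : ℝ) * x ε = (∑ k ∈ Finset.range n, u k) + ∑' k, v k := by
      rw [hxdef]
      calc (b n : ℝ) * ∑' k, f ε k = ∑' k, (b n : ℝ) * f ε k := (tsum_mul_left).symm
        _ = ∑' k, (u k + v k) := tsum_congr huv
        _ = (∑' k, u k) + ∑' k, v k := Summable.tsum_add hus hvs
        _ = (∑ k ∈ Finset.range n, u k) + ∑' k, v k := by rw [tsum_eq_sum husupp]
    have hucoe : (((∑ k ∈ Finset.range n, u k : ℝ)) : AddCircle (1:ℝ)) = 0 := by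
      have hterm : ∀ k ∈ Finset.range n, ∃ N : ℕ, u k = (N : ℝ) := by
        intro k hk
        by_cases h : m k < n
        · by_cases hε : ε k
          · refine ⟨b n / b (m k + 1), ?_⟩
            have hd : b (m k + 1) ∣ b n := stmt4_dvd hdvd (by omega)
            have hne : ((b (m k + 1) : ℕ) : ℝ) ≠ 0 := by
              exact_mod_cast (hbpos (m k + 1)).ne'
            rw [Nat.cast_div hd hne]
            simp [hudef, h, hfdef, hε, hβdef, div_eq_mul_inv]
          · exact ⟨0, by simp [hudef, h, hfdef, hε]⟩
        · exact ⟨0, by simp [hudef, h]⟩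
      -- push the coercion through the finite sum
      have : (((∑ k ∈ Finset.range n, u k : ℝ)) : AddCircle (1:ℝ))
          = ∑ k ∈ Finset.range n, (((u k : ℝ)) : AddCircle (1:ℝ)) := by
        exact map_sum (QuotientAddGroup.mk' (AddSubgroup.zmultiples (1:ℝ))) u (Finset.range n)
      rw [this]
      apply Finset.sum_eq_zero
      intro k hk
      obtain ⟨N, hN⟩ := hterm k hk
      rw [hN]
      exact stmt4_natcast_coe_zero N
    have hcoesplit : (((b n : ℝ) * x ε : ℝ) : AddCircle (1:ℝ))
        = ((∑' k, v k : ℝ) : AddCircle (1:ℝ)) := by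
      rw [hxsplit]
      rw [QuotientAddGroup.mk_add, hucoe, zero_add]
    rw [hcoesplit]
    calc ‖((∑' k, v k : ℝ) : AddCircle (1:ℝ))‖ ≤ ‖(∑' k, v k : ℝ)‖ :=
          QuotientAddGroup.norm_mk_le_norm
      _ = ∑' k, v k := by
          rw [Real.norm_eq_abs, abs_of_nonneg (tsum_nonneg hv0)]
      _ ≤ ∑' k, c n k := Summable.tsum_le_tsum hvle hvs (hcsummable n)
  -- summability of the majorant via a double sum
  have hslice : ∀ k, Summable (fun n => c n k) := by
    intro k
    apply summable_of_ne_finset_zero (s := Finset.range (m k + 1))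
    intro n hn
    simp only [Finset.mem_range, not_lt] at hn
    have : m k < n := by omega
    simp [hcdef, this]
  have hslice_sum : ∀ k, ∑' n, c n k ≤ (2:ℝ)⁻¹ ^ k := by
    intro k
    have h1 : ∑' n, c n k = ∑ n ∈ Finset.range (m k + 1), c n k := by
      apply tsum_eq_sum
      intro n hn
      simp only [Finset.mem_range, not_lt] at hn
      have : m k < n := by omega
      simp [hcdef, this]
    rw [h1]
    have h2 : ∀ n ∈ Finset.range (m k + 1), c n k = (b n : ℝ) * (β k)⁻¹ := by
      intro n hn
      simp only [Finset.mem_range] at hn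
      have : ¬ (m k < n) := by omega
      simp [hcdef, this]
    rw [Finset.sum_congr rfl h2, ← Finset.sum_mul]
    have h3 : (∑ n ∈ Finset.range (m k + 1), (b n : ℝ)) ≤ 2 * (b (m k) : ℝ) := by
      have := stmt4_sum hratio (m k)
      push_cast
      exact_mod_cast this
    have h4 : (b (m k) : ℝ) * (β k)⁻¹ ≤ ((2:ℝ) ^ (k + 2))⁻¹ := by
      rw [mul_inv_le_iff₀ (βpos k), inv_mul_eq_div, le_div_iff₀ (by positivity)]
      calc (b (m k) : ℝ) * 2 ^ (k + 2) = 2 ^ (k + 2) * (b (m k) : ℝ) := by ring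
        _ ≤ β k := hβm k
    have h5 : (0:ℝ) ≤ (β k)⁻¹ := by positivity
    calc (∑ n ∈ Finset.range (m k + 1), (b n : ℝ)) * (β k)⁻¹
        ≤ (2 * (b (m k) : ℝ)) * (β k)⁻¹ := mul_le_mul_of_nonneg_right h3 h5
      _ = 2 * ((b (m k) : ℝ) * (β k)⁻¹) := by ring
      _ ≤ 2 * ((2:ℝ) ^ (k + 2))⁻¹ := by nlinarith [h4]
      _ ≤ (2:ℝ)⁻¹ ^ k := by
          rw [inv_pow]
          have h6 : 2 * ((2:ℝ) ^ (k + 2))⁻¹ = ((2:ℝ) ^ (k + 1))⁻¹ := by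
            rw [show k + 2 = (k + 1) + 1 from rfl, pow_succ]
            rw [mul_inv]
            ring
          rw [h6]
          exact inv_anti₀ (by positivity)
            (pow_le_pow_right₀ (by norm_num) (by omega))
  have hgeo2 : Summable (fun k : ℕ => (2 : ℝ)⁻¹ ^ k) :=
    summable_geometric_of_lt_one (by norm_num) (by norm_num)
  have hF : Summable (fun p : ℕ × ℕ => c p.2 p.1) := by
    refine (summable_prod_of_nonneg (fun p => hc0 p.2 p.1)).mpr ⟨fun k => hslice k, ?_⟩
    refine Summable.of_nonneg_of_le (fun k => tsum_nonneg (fun n => hc0 n k))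
      (fun k => hslice_sum k) hgeo2
  have hFsw : Summable (fun p : ℕ × ℕ => c p.1 p.2) := by
    have := hF.prod_symm
    simpa [Prod.swap] using this
  have hmaj : Summable (fun n => ∑' k, c n k) :=
    ((summable_prod_of_nonneg (fun p => hc0 p.1 p.2)).mp hFsw).2
  have hmem : ∀ ε, ((x ε : ℝ) : AddCircle (1:ℝ)) ∈ G1 b := by
    intro ε
    exact Summable.of_nonneg_of_le (fun n => norm_nonneg _) (fun n => hkey ε n) hmaj
  -- injectivity
  have hinj : Function.Injective (fun ε => ((x ε : ℝ) : AddCircle (1:ℝ))) := by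
    intro ε ε' h
    simp only at h
    have hxx : x ε = x ε' := by
      obtain ⟨z, hz⟩ := stmt4_int_of_coe_eq h
      have h1 : |x ε - x ε'| < 1 := by
        rw [abs_sub_lt_iff]
        constructor
        · nlinarith [hxle ε, hx0 ε']
        · nlinarith [hxle ε', hx0 ε]
      rw [hz] at h1
      have : z = 0 := by
        by_contra hz0
        have : (1:ℝ) ≤ |(z : ℝ)| := by
          rw [← Int.cast_abs]
          exact_mod_cast Int.one_le_abs (by omega)
        linarith
      rw [this] at hz
      push_cast at hz
      linarith
    by_contra hne
    have hex : ∃ k, ε k ≠ ε' k := Function.ne_iff.mp hne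
    set k := Nat.find hex with hkdef
    have hk : ε k ≠ ε' k := Nat.find_spec hex
    have hminlt : ∀ j, j < k → ε j = ε' j := fun j hj => by
      have := Nat.find_min hex hj
      simpa using this
    set D : ℕ → ℝ := fun j => f ε j - f ε' j with hDdef
    have hDs : Summable D := (hfsummable ε).sub (hfsummable ε')
    have hD0 : ∑' j, D j = 0 := by
      rw [hDdef]
      rw [Summable.tsum_sub (hfsummable ε) (hfsummable ε')]
      rw [hxdef] at hxx
      simp only at hxx
      rw [hxx]
      ring
    have hsplit := Summable.sum_add_tsum_nat_add (f := D) (k + 1) hDs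
    have hhead : ∑ j ∈ Finset.range (k + 1), D j = D k := by
      apply Finset.sum_eq_single_of_mem
      · simp
      · intro j hj hjk
        simp only [Finset.mem_range] at hj
        have : j < k := by omega
        simp [hDdef, hfdef, hminlt j this]
    have hDabs : ∀ j, |D j| ≤ (β j)⁻¹ := by
      intro j
      have h1 : 0 ≤ (β j)⁻¹ := by positivity
      rcases Bool.eq_false_or_eq_true (ε j) with h2 | h2 <;>
        rcases Bool.eq_false_or_eq_true (ε' j) with h3 | h3 <;>
          simp [hDdef, hfdef, h2, h3, abs_of_nonneg, abs_of_nonpos, h1]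
    have hDkabs : |D k| = (β k)⁻¹ := by
      rcases Bool.eq_false_or_eq_true (ε k) with h2 | h2 <;>
        rcases Bool.eq_false_or_eq_true (ε' k) with h3 | h3
      · exact absurd (h2.trans h3.symm) hk
      · simp [hDdef, hfdef, h2, h3, abs_of_nonpos, (βpos k).le]
      · simp [hDdef, hfdef, h2, h3, abs_of_nonneg, (βpos k).le]
      · exact absurd (h2.trans h3.symm) hk
    have htails : Summable (fun i => D (i + (k + 1))) :=
      (summable_nat_add_iff (k + 1)).mpr hDs
    have htailabs : |∑' i, D (i + (k + 1))| ≤ (β k)⁻¹ / 7 := by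
      have h1 : Summable (fun i => ‖D (i + (k + 1))‖) := by
        refine Summable.of_nonneg_of_le (fun i => norm_nonneg _) (fun i => ?_)
          (htail_sum k).1
        rw [Real.norm_eq_abs]
        exact hDabs _
      calc |∑' i, D (i + (k + 1))| = ‖∑' i, D (i + (k + 1))‖ := (Real.norm_eq_abs _).symm
        _ ≤ ∑' i, ‖D (i + (k + 1))‖ := norm_tsum_le_tsum_norm h1
        _ ≤ ∑' i, (β (i + (k + 1)))⁻¹ := by
            refine Summable.tsum_le_tsum (fun i => ?_) h1 (htail_sum k).1
            rw [Real.norm_eq_abs]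
            exact hDabs _
        _ ≤ (β k)⁻¹ / 7 := (htail_sum k).2
    -- derive contradiction
    rw [hhead, hD0] at hsplit
    have : |D k| ≤ (β k)⁻¹ / 7 := by
      have : D k = - ∑' i, D (i + (k + 1)) := by linarith
      rw [this, abs_neg]
      exact htailabs
    rw [hDkabs] at this
    have hβkpos : 0 < (β k)⁻¹ := inv_pos.mpr (βpos k)
    linarith
  -- conclusion: an injection of an uncountable type into G1 b
  apply stmt4_uncountable_funs
  have huniv : (Set.univ : Set (ℕ → Bool)).Countable := by
    have h1 : ((fun ε => ((x ε : ℝ) : AddCircle (1:ℝ))) ⁻¹' (G1 b)).Countable :=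
      hc.preimage hinj
    refine h1.mono ?_
    intro ε _
    exact hmem ε
  exact Set.countable_univ_iff.mp huniv
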